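/- Co-information as the measure of the triple content intersection: for random variables X : Ω → α, Y : Ω → β, Z : Ω → γ, H(X) + H(Y) + H(Z) − H(⟨X,Y⟩) − H(⟨X,Z⟩) − H(⟨Y,Z⟩) + H(⟨X,Y,Z⟩) = Σ_{S ∈ C(X) ∩ C(Y) ∩ C(Z)} L°(S), where ⟨·,·⟩ denotes the joint variable mapping ω to the tuple of values. -/

import Mathlib

open Finset
open scoped Classical

/-- The total loss of a finite family of reals:
`L(p_1, …, p_n) = Σ_i p_i log(1/p_i) − (Σ_i p_i) log(1/Σ_i p_i)`. -/
noncomputable def totalLoss {ι : Type*} (s : Finset ι) (p : ι → ℝ) : ℝ :=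
  ∑ i ∈ s, p i * Real.log (1 / p i) - (∑ i ∈ s, p i) * Real.log (1 / ∑ i ∈ s, p i)

/-- The interior loss, defined by inclusion–exclusion:
`L°(p_1, …, p_n) = Σ_{S ⊆ {1,…,n}} (−1)^{n−|S|} L((p_i)_{i∈S})`. -/
noncomputable def interiorLoss {ι : Type*} [DecidableEq ι] (s : Finset ι) (p : ι → ℝ) : ℝ :=
  ∑ T ∈ s.powerset, (-1 : ℝ) ^ (s.card - T.card) * totalLoss T p

/-- The probability that the random variable `X : Ω → α` takes the value `a`,
with respect to the mass function `P`. -/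
noncomputable def probOf {Ω α : Type*} [Fintype Ω] (P : Ω → ℝ) (X : Ω → α) (a : α) : ℝ :=
  ∑ ω ∈ Finset.univ.filter (fun ω => X ω = a), P ω

/-- The Shannon entropy `H(X) = Σ_{a ∈ X(Ω)} P(X = a) log(1/P(X = a))` of a random
variable `X : Ω → α` with respect to the mass function `P`. -/
noncomputable def entropy {Ω α : Type*} [Fintype Ω] (P : Ω → ℝ) (X : Ω → α) : ℝ :=
  ∑ a ∈ Finset.univ.image X, probOf P X a * Real.log (1 / probOf P X a)

/-- The content `C(X)` of a random variable `X : Ω → α`: the collection of subsets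
`S ⊆ Ω` with `|S| ≥ 2` on which `X` is not constant. -/
noncomputable def content {Ω α : Type*} [Fintype Ω] (X : Ω → α) : Finset (Finset Ω) :=
  Finset.univ.filter (fun S => 2 ≤ S.card ∧ ∃ ω ∈ S, ∃ ω2 ∈ S, X ω ≠ X ω2)

/-! ### Auxiliary lemmas -/

lemma totalLoss_empty {ι : Type*} (p : ι → ℝ) : totalLoss (∅ : Finset ι) p = 0 := by
  simp [totalLoss]

lemma totalLoss_singleton {ι : Type*} (p : ι → ℝ) (i : ι) :
    totalLoss ({i} : Finset ι) p = 0 := by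
  simp [totalLoss]

lemma interiorLoss_empty {ι : Type*} [DecidableEq ι] (p : ι → ℝ) :
    interiorLoss (∅ : Finset ι) p = 0 := by
  simp [interiorLoss, totalLoss_empty]

lemma interiorLoss_singleton {ι : Type*} [DecidableEq ι] (p : ι → ℝ) (i : ι) :
    interiorLoss ({i} : Finset ι) p = 0 := by
  rw [interiorLoss]
  refine Finset.sum_eq_zero fun T hT => ?_
  rw [mem_powerset, Finset.subset_singleton_iff] at hT
  rcases hT with h | h <;> simp [h, totalLoss_empty, totalLoss_singleton]

/-- Möbius inversion over the subset lattice. -/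
lemma mobius_inv {ι : Type*} [DecidableEq ι] (f : Finset ι → ℝ) (s : Finset ι) :
    ∑ T ∈ s.powerset, ∑ U ∈ T.powerset, (-1:ℝ)^(T.card - U.card) * f U = f s := by
  have hps : ∀ T ∈ s.powerset, T.powerset = s.powerset.filter (fun U => U ⊆ T) := by
    intro T hT
    ext U
    simp only [mem_powerset, mem_filter, mem_powerset] at *
    exact ⟨fun h => ⟨h.trans hT, h⟩, fun h => h.2⟩
  calc ∑ T ∈ s.powerset, ∑ U ∈ T.powerset, (-1:ℝ)^(T.card - U.card) * f U
      = ∑ T ∈ s.powerset, ∑ U ∈ s.powerset, if U ⊆ T then (-1:ℝ)^(T.card - U.card) * f U else 0 := by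
        refine Finset.sum_congr rfl fun T hT => ?_
        rw [hps T hT, Finset.sum_filter]
    _ = ∑ U ∈ s.powerset, (∑ T ∈ s.powerset.filter (fun T => U ⊆ T), (-1:ℝ)^(T.card - U.card)) * f U := by
        rw [Finset.sum_comm]
        refine Finset.sum_congr rfl fun U hU => ?_
        rw [Finset.sum_mul, ← Finset.sum_filter]
    _ = ∑ U ∈ s.powerset, (if U = s then (1:ℝ) else 0) * f U := by
        refine Finset.sum_congr rfl fun U hU => ?_
        rw [mem_powerset] at hU
        congr 1
        have : ∑ T ∈ s.powerset.filter (fun T => U ⊆ T), (-1:ℝ)^(T.card - U.card)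
            = ∑ V ∈ (s \ U).powerset, (-1:ℝ)^V.card := by
          refine Finset.sum_nbij' (fun T => T \ U) (fun V => U ∪ V) ?_ ?_ ?_ ?_ ?_
          · intro T hT
            simp only [mem_filter, mem_powerset] at hT
            rw [mem_powerset]
            exact sdiff_subset_sdiff hT.1 (le_refl _)
          · intro V hV
            rw [mem_powerset] at hV
            simp only [mem_filter, mem_powerset]
            constructor
            · exact union_subset hU (hV.trans (sdiff_subset))
            · exact subset_union_left
          · intro T hT
            simp only [mem_filter, mem_powerset] at hT
            exact union_sdiff_of_subset hT.2
          · intro V hV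
            rw [mem_powerset] at hV
            have : Disjoint U V := disjoint_of_subset_right hV sdiff_disjoint.symm
            show (U ∪ V) \ U = V
            rw [union_sdiff_cancel_left this]
          · intro T hT
            simp only [mem_filter, mem_powerset] at hT
            rw [card_sdiff_of_subset hT.2]
        rw [this]
        have hz := @Finset.sum_powerset_neg_one_pow_card _ _ (s \ U)
        have : ((∑ m ∈ (s \ U).powerset, (-1 : ℤ) ^ m.card : ℤ) : ℝ)
            = ∑ V ∈ (s \ U).powerset, (-1:ℝ)^V.card := by push_cast; ring_nf
        rw [← this, hz]
        by_cases h : U = s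
        · simp [h]
        · have : s \ U ≠ ∅ := by
            intro hc
            exact h (subset_antisymm hU (sdiff_eq_empty_iff_subset.mp hc))
          simp [this, h]
    _ = f s := by
        rw [Finset.sum_eq_single s]
        · simp
        · intro b _ hb; simp [hb]
        · intro h; exact absurd (mem_powerset_self s) h

lemma mobius {ι : Type*} [DecidableEq ι] (s : Finset ι) (p : ι → ℝ) :
    ∑ T ∈ s.powerset, interiorLoss T p = totalLoss s p := by
  simpa [interiorLoss] using mobius_inv (fun U => totalLoss U p) s

/-- The entropy of a random variable equals the sum of interior losses over its content. -/
lemma entropy_eq_sum_content {Ω α : Type*} [Fintype Ω]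
    (P : Ω → ℝ) (hsum : ∑ ω, P ω = 1) (X : Ω → α) :
    entropy P X = ∑ S ∈ content X, interiorLoss S P := by
  have huniv : totalLoss (univ : Finset Ω) P = ∑ ω, P ω * Real.log (1 / P ω) := by
    simp [totalLoss, hsum]
  have hfiber : ∀ a : α, totalLoss (univ.filter (fun ω => X ω = a)) P
      = (∑ ω ∈ univ.filter (fun ω => X ω = a), P ω * Real.log (1 / P ω))
        - probOf P X a * Real.log (1 / probOf P X a) := by
    intro a; simp [totalLoss, probOf]
  have hpart : ∑ a ∈ univ.image X, ∑ ω ∈ univ.filter (fun ω => X ω = a), P ω * Real.log (1 / P ω)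
      = ∑ ω, P ω * Real.log (1 / P ω) := by
    exact Finset.sum_fiberwise_of_maps_to (fun x _ => mem_image_of_mem X (mem_univ x)) _
  have hstep : entropy P X = totalLoss (univ : Finset Ω) P
      - ∑ a ∈ univ.image X, totalLoss (univ.filter (fun ω => X ω = a)) P := by
    rw [huniv, entropy]
    simp only [hfiber, Finset.sum_sub_distrib, hpart]
    ring
  rw [hstep, ← mobius (univ : Finset Ω) P]
  conv_lhs => rw [Finset.sum_congr rfl (fun a (_ : a ∈ univ.image X) => (mobius (univ.filter (fun ω => X ω = a)) P).symm)]
  rw [Finset.powerset_univ]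
  have hsplit : ∑ T ∈ (univ : Finset (Finset Ω)), interiorLoss T P
      = ∑ T ∈ content X, interiorLoss T P
        + ∑ T ∈ univ.filter (fun S => ¬(2 ≤ S.card ∧ ∃ ω ∈ S, ∃ ω2 ∈ S, X ω ≠ X ω2)), interiorLoss T P := by
    rw [content, Finset.sum_filter_add_sum_filter_not]
  rw [hsplit]
  have key : ∑ a ∈ univ.image X, ∑ T ∈ (univ.filter (fun ω => X ω = a)).powerset, interiorLoss T P
      = ∑ T ∈ univ.filter (fun S => ¬(2 ≤ S.card ∧ ∃ ω ∈ S, ∃ ω2 ∈ S, X ω ≠ X ω2)), interiorLoss T P := by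
    have hdrop : ∀ a : α, ∑ T ∈ (univ.filter (fun ω => X ω = a)).powerset, interiorLoss T P
        = ∑ T ∈ ((univ.filter (fun ω => X ω = a)).powerset).filter Finset.Nonempty, interiorLoss T P := by
      intro a
      refine (Finset.sum_subset (filter_subset _ _) ?_).symm
      intro T hT hT'
      simp only [mem_filter, hT, true_and] at hT'
      rw [not_nonempty_iff_eq_empty.mp hT', interiorLoss_empty]
    simp only [hdrop]
    rw [← Finset.sum_biUnion]
    · refine Finset.sum_subset ?_ ?_
      · intro T hT
        simp only [mem_biUnion, mem_filter, mem_powerset, mem_image, mem_univ, true_and] at hT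
        obtain ⟨a, -, hsub, -⟩ := hT
        simp only [mem_filter, mem_univ, true_and, not_and, not_exists, not_not]
        intro _ ω hω ω2 hω2
        have h1 := (mem_filter.mp (hsub hω)).2
        have h2 := (mem_filter.mp (hsub hω2)).2
        rw [h1, h2]
      · intro T hT hT'
        by_cases hne : T.Nonempty
        · exfalso
          apply hT'
          simp only [mem_filter, mem_univ, true_and, not_and, not_exists, not_not] at hT
          have hconst : ∀ ω ∈ T, ∀ ω2 ∈ T, X ω = X ω2 := by
            by_cases hcard : 2 ≤ T.card
            · exact hT hcard
            · intro ω hω ω2 hω2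
              have : ω = ω2 := Finset.card_le_one.mp (by omega) ω hω ω2 hω2
              rw [this]
          obtain ⟨ω0, hω0⟩ := hne
          simp only [mem_biUnion, mem_filter, mem_powerset, mem_image, mem_univ, true_and]
          refine ⟨X ω0, ⟨ω0, rfl⟩, ?_, ⟨ω0, hω0⟩⟩
          intro ω hω
          simp only [mem_filter, mem_univ, true_and]
          exact hconst ω hω ω0 hω0
        · rw [not_nonempty_iff_eq_empty.mp hne, interiorLoss_empty]
    · intro a _ b _ hab
      simp only [Function.onFun]
      rw [Finset.disjoint_left]
      intro T hTa hTb
      simp only [mem_filter, mem_powerset] at hTa hTb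
      obtain ⟨ω0, hω0⟩ := hTa.2
      have h1 := (mem_filter.mp (hTa.1 hω0)).2
      have h2 := (mem_filter.mp (hTb.1 hω0)).2
      exact hab (h1 ▸ h2 ▸ rfl)
  rw [key]; ring

/-- The content of a joint variable is the union of contents. -/
lemma content_pair {Ω α β : Type*} [Fintype Ω] (X : Ω → α) (Y : Ω → β) :
    content (fun ω => (X ω, Y ω)) = content X ∪ content Y := by
  ext S
  simp only [content, mem_union, mem_filter, mem_univ, true_and, Prod.mk.injEq, ne_eq, not_and]
  constructor
  · rintro ⟨hc, ω, hω, ω2, hω2, hne⟩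
    by_cases hx : X ω = X ω2
    · exact Or.inr ⟨hc, ω, hω, ω2, hω2, hne hx⟩
    · exact Or.inl ⟨hc, ω, hω, ω2, hω2, hx⟩
  · rintro (⟨hc, ω, hω, ω2, hω2, hne⟩ | ⟨hc, ω, hω, ω2, hω2, hne⟩)
    · exact ⟨hc, ω, hω, ω2, hω2, fun h => absurd h hne⟩
    · exact ⟨hc, ω, hω, ω2, hω2, fun _ => hne⟩

lemma content_triple {Ω α β γ : Type*} [Fintype Ω] (X : Ω → α) (Y : Ω → β) (Z : Ω → γ) :
    content (fun ω => (X ω, Y ω, Z ω)) = content X ∪ (content Y ∪ content Z) := by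
  rw [content_pair X (fun ω => (Y ω, Z ω)), content_pair]

/-- co-information as the measure of the triple content intersection.
For `X : Ω → α`, `Y : Ω → β`, `Z : Ω → γ`,
`H(X) + H(Y) + H(Z) − H(⟨X,Y⟩) − H(⟨X,Z⟩) − H(⟨Y,Z⟩) + H(⟨X,Y,Z⟩)
  = Σ_{S ∈ C(X) ∩ C(Y) ∩ C(Z)} L°(S)`. -/
theorem coInformation_eq_sum_content_inter {Ω α β γ : Type*} [Fintype Ω] [Nonempty Ω]
    [Fintype α] [Fintype β] [Fintype γ]
    (P : Ω → ℝ) (hP : ∀ ω, 0 < P ω) (hsum : ∑ ω, P ω = 1)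
    (X : Ω → α) (Y : Ω → β) (Z : Ω → γ) :
    entropy P X + entropy P Y + entropy P Z
      - entropy P (fun ω => (X ω, Y ω)) - entropy P (fun ω => (X ω, Z ω))
      - entropy P (fun ω => (Y ω, Z ω)) + entropy P (fun ω => (X ω, Y ω, Z ω)) =
      ∑ S ∈ content X ∩ content Y ∩ content Z, interiorLoss S P := by
  rw [entropy_eq_sum_content P hsum X, entropy_eq_sum_content P hsum Y,
    entropy_eq_sum_content P hsum Z, entropy_eq_sum_content P hsum (fun ω => (X ω, Y ω)),
    entropy_eq_sum_content P hsum (fun ω => (X ω, Z ω)),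
    entropy_eq_sum_content P hsum (fun ω => (Y ω, Z ω)),
    entropy_eq_sum_content P hsum (fun ω => (X ω, Y ω, Z ω)),
    content_pair X Y, content_pair X Z, content_pair Y Z, content_triple X Y Z]
  set A := content X
  set B := content Y
  set C := content Z
  set f := fun S => interiorLoss S P
  have h1 := Finset.sum_union_inter (s₁ := A) (s₂ := B) (f := f)
  have h2 := Finset.sum_union_inter (s₁ := A ∩ B) (s₂ := C) (f := f)
  have h3 := Finset.sum_union_inter (s₁ := A ∪ C) (s₂ := B ∪ C) (f := f)
  have e1 : (A ∪ C) ∪ (B ∪ C) = A ∪ (B ∪ C) := by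
    rw [union_assoc, union_comm C (B ∪ C), union_assoc, union_self]
  have e2 : (A ∪ C) ∩ (B ∪ C) = (A ∩ B) ∪ C := (Finset.inter_union_distrib_right A B C).symm
  rw [e1, e2] at h3
  linarith
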